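/- Let λ and μ be partitions of n, and let T_λ and T_μ be tableaux of shapes λ and μ, with associated elements t_λ, t_μ ∈ S̃_n and associated permutations s(λ), s(μ) ∈ S_n. Then t_μ t_λ t_μ^{−1} = z^{d(λ)d(μ)} t_λ^{s(μ)}, where d(λ) = |λ| − l(λ) and d(μ) = |μ| − l(μ). -/

import Mathlib

inductive SpinGen (n : ℕ) : Type
  | z : SpinGen n
  | t : Fin (n - 1) → SpinGen n

open FreeGroup in
def spinRels (n : ℕ) : Set (FreeGroup (SpinGen n)) :=
  {w | w = (of SpinGen.z) ^ 2
     ∨ (∃ i : Fin (n - 1), w = (of (SpinGen.t i)) ^ 2 * (of SpinGen.z)⁻¹)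
     ∨ (∃ i j : Fin (n - 1), (j : ℕ) = (i : ℕ) + 1 ∧
          w = ((of (SpinGen.t i)) * (of (SpinGen.t j))) ^ 3 * (of SpinGen.z)⁻¹)
     ∨ (∃ i j : Fin (n - 1), (j : ℕ) + 1 < (i : ℕ) ∧
          w = (of (SpinGen.t i)) * (of (SpinGen.t j)) *
              ((of SpinGen.z) * (of (SpinGen.t j)) * (of (SpinGen.t i)))⁻¹)
     ∨ (∃ i : Fin (n - 1), w = (of SpinGen.z) * (of (SpinGen.t i)) *
              ((of (SpinGen.t i)) * (of SpinGen.z))⁻¹)}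

abbrev SpinSym (n : ℕ) : Type := PresentedGroup (spinRels n)

def zEl (n : ℕ) : SpinSym n := PresentedGroup.of SpinGen.z

def tEl {n : ℕ} (i : Fin (n - 1)) : SpinSym n := PresentedGroup.of (SpinGen.t i)

/-- The element `x_i = t_i t_{i+1} ⋯ t_n ⋯ t_{i+1} t_i ∈ S̃_{n+1}`
(zero-based: `i : Fin n` corresponds to the one-based index `i+1`). -/
def xEl {n : ℕ} (i : Fin n) : SpinSym (n + 1) :=
  (((List.finRange n).drop (i : ℕ)).map (fun j : Fin n => tEl (n := n + 1) j)).prod *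
    ((((List.finRange n).drop (i : ℕ)).dropLast.reverse).map
      (fun j : Fin n => tEl (n := n + 1) j)).prod

/-- The cycle `[i_1 i_2 ⋯ i_m] ∈ S̃_{n+1}`: `[i_1] = z`, and for `m > 1`,
`[i_1 ⋯ i_m] = x_{i_1} x_{i_m} x_{i_{m-1}} ⋯ x_{i_2} x_{i_1}`. -/
def cycleEl {n : ℕ} : List (Fin n) → SpinSym (n + 1)
  | [] => 1
  | [_] => zEl (n + 1)
  | a :: b :: rest => xEl a * (((a :: b :: rest).reverse).map xEl).prod

-- basic relations
lemma rel_one {n : ℕ} {w : FreeGroup (SpinGen n)} (h : w ∈ spinRels n) :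
    PresentedGroup.mk (spinRels n) w = 1 := by
  exact (QuotientGroup.eq_one_iff w).mpr (Subgroup.subset_normalClosure h)

lemma z_mul_z (n : ℕ) : zEl n * zEl n = 1 := by
  have := rel_one (n := n) (w := (FreeGroup.of SpinGen.z) ^ 2) (Or.inl rfl)
  simpa [zEl, PresentedGroup.of, sq] using this

lemma t_mul_t {n : ℕ} (i : Fin (n - 1)) : tEl i * tEl i = zEl n := by
  have := rel_one (n := n) (Or.inr (Or.inl ⟨i, rfl⟩))
  simp only [map_mul, map_pow, map_inv, sq] at this
  have h : (tEl i * tEl i) * (zEl n)⁻¹ = 1 := this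
  exact (mul_inv_eq_one).mp h

lemma z_mul_t {n : ℕ} (i : Fin (n - 1)) : zEl n * tEl i = tEl i * zEl n := by
  have := rel_one (n := n) (Or.inr (Or.inr (Or.inr (Or.inr ⟨i, rfl⟩))))
  simp only [map_mul, map_inv] at this
  have h : (zEl n * tEl i) * (tEl i * zEl n)⁻¹ = 1 := this
  exact (mul_inv_eq_one).mp h

lemma braid {n : ℕ} (i j : Fin (n - 1)) (h : (j : ℕ) = (i : ℕ) + 1) :
    (tEl i * tEl j) * (tEl i * tEl j) * (tEl i * tEl j) = zEl n := by
  have := rel_one (n := n) (Or.inr (Or.inr (Or.inl ⟨i, j, h, rfl⟩)))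
  simp only [map_mul, map_pow, map_inv] at this
  have h' : ((tEl i * tEl j) ^ 3) * (zEl n)⁻¹ = 1 := this
  have := (mul_inv_eq_one).mp h'
  rw [pow_succ, pow_succ, pow_one] at this
  exact this

lemma distant {n : ℕ} (i j : Fin (n - 1)) (h : (j : ℕ) + 1 < (i : ℕ)) :
    tEl i * tEl j = zEl n * tEl j * tEl i := by
  have := rel_one (n := n) (Or.inr (Or.inr (Or.inr (Or.inl ⟨i, j, h, rfl⟩))))
  simp only [map_mul, map_inv] at this
  have h' : (tEl i * tEl j) * (zEl n * tEl j * tEl i)⁻¹ = 1 := this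
  exact (mul_inv_eq_one).mp h'

lemma z_comm {n : ℕ} (g : SpinSym n) : zEl n * g = g * zEl n := by
  have : g ∈ Subgroup.centralizer ({zEl n} : Set (SpinSym n)) := by
    apply PresentedGroup.generated_by
    intro j
    rw [Subgroup.mem_centralizer_iff]
    intro h hh
    rcases hh with rfl
    cases j with
    | z => rfl
    | t i => exact z_mul_t i
  exact Subgroup.mem_centralizer_iff.mp this (zEl n) rfl

lemma z_sq (n : ℕ) : zEl n ^ 2 = 1 := by rw [sq]; exact z_mul_z n

lemma z_pow_parity {n : ℕ} {a b : ℕ} (h : a % 2 = b % 2) :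
    zEl n ^ a = zEl n ^ b := by
  have key : ∀ c : ℕ, zEl n ^ c = zEl n ^ (c % 2) := by
    intro c
    conv_lhs => rw [← Nat.div_add_mod c 2]
    rw [pow_add, pow_mul, z_sq, one_pow, one_mul]
  rw [key a, key b, h]

lemma z_inv (n : ℕ) : (zEl n)⁻¹ = zEl n := by
  rw [inv_eq_iff_mul_eq_one]; exact z_mul_z n

lemma t_inv {n : ℕ} (i : Fin (n - 1)) : (tEl i)⁻¹ = zEl n * tEl i := by
  rw [inv_eq_iff_mul_eq_one, ← mul_assoc, ← z_comm, mul_assoc, t_mul_t, z_mul_z]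


-- z-centrality rewriting toolkit
lemma z_swap {n : ℕ} (g h : SpinSym n) : g * (zEl n * h) = zEl n * (g * h) := by
  rw [← mul_assoc, ← z_comm, mul_assoc]

lemma z_swap' {n : ℕ} (g : SpinSym n) : g * zEl n = zEl n * g := (z_comm g).symm

lemma zz_cancel {n : ℕ} (g : SpinSym n) : zEl n * (zEl n * g) = g := by
  rw [← mul_assoc, z_mul_z, one_mul]

lemma t_mul_t' {n : ℕ} (i : Fin (n - 1)) (g : SpinSym n) :
    tEl i * (tEl i * g) = zEl n * g := by rw [← mul_assoc, t_mul_t]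

lemma braid' {n : ℕ} (i j : Fin (n - 1)) (h : (j : ℕ) = (i : ℕ) + 1) :
    tEl i * tEl j * tEl i = tEl j * tEl i * tEl j := by
  have hb := braid i j h
  have key : (tEl i * tEl j * tEl i) * (tEl j * tEl i * tEl j) = zEl n := by
    rw [← hb]; group
  have h2 : (tEl j * tEl i * tEl j) * (tEl j * tEl i * tEl j) = zEl n := by
    simp only [mul_assoc, t_mul_t', z_swap, zz_cancel]
    rw [t_mul_t]
  -- from key and h2 : aba * w = z = w * w with w := tEl j * tEl i * tEl j... cancel right
  have := key.trans h2.symm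
  exact mul_right_cancel this
-- continuation fragment: tested together with a.lean via cat
section XStruct
variable {n : ℕ}

-- generators of SpinSym (n+1) are indexed by Fin n (as n + 1 - 1 = n definitionally)
abbrev tE (i : Fin n) : SpinSym (n + 1) := tEl (n := n + 1) i
abbrev zE : SpinSym (n + 1) := zEl (n + 1)

lemma distant2 (i j : Fin n) (h : (i : ℕ) + 1 < j ∨ (j : ℕ) + 1 < i) :
    tE i * tE j = zE * (tE j * tE i) := by
  rcases h with h | h
  · have := distant (n := n + 1) j i h
    have h2 : zE * (tE j * tE i) = zE * (zE * (tE i * tE j)) := by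
      rw [this]; simp only [mul_assoc]
    rw [h2, zz_cancel]
  · have := distant (n := n + 1) i j h
    rw [this]; simp only [mul_assoc]

def xList (n : ℕ) (i : ℕ) : List (Fin n) :=
  ((List.finRange n).drop i) ++ ((List.finRange n).drop i).dropLast.reverse

lemma xEl_eq (i : Fin n) : xEl i = ((xList n i).map tE).prod := by
  rw [xList, List.map_append, List.prod_append]; rfl

lemma mem_xList {i : ℕ} {j : Fin n} (hj : j ∈ xList n i) : i ≤ (j : ℕ) := by
  have key : ∀ k : Fin n, k ∈ (List.finRange n).drop i → i ≤ (k : ℕ) := by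
    intro k hk
    rw [List.mem_iff_getElem] at hk
    obtain ⟨m, hm, hk⟩ := hk
    rw [List.getElem_drop, List.getElem_finRange] at hk
    subst hk
    simp only [Fin.coe_cast]
    omega
  rw [xList, List.mem_append, List.mem_reverse] at hj
  rcases hj with hj | hj
  · exact key j hj
  · exact key j (List.dropLast_sublist _ |>.mem hj)

lemma length_xList {i : ℕ} (hi : i < n) :
    (xList n i).length = 2 * (n - i) - 1 := by
  rw [xList]
  simp only [List.length_append, List.length_reverse, List.length_dropLast,
    List.length_drop, List.length_finRange]
  omega

lemma xList_top (hn : 0 < n) : xList n (n - 1) = [⟨n - 1, by omega⟩] := by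
  have hlt : n - 1 < (List.finRange n).length := by simp only [List.length_finRange]; omega
  rw [xList, List.drop_eq_getElem_cons hlt]
  have : (List.finRange n).drop (n - 1 + 1) = [] := by
    apply List.drop_eq_nil_of_le; simp only [List.length_finRange]; omega
  rw [this, List.getElem_finRange]
  simp

lemma xEl_top (hn : 0 < n) : xEl (⟨n - 1, by omega⟩ : Fin n) = tE ⟨n - 1, by omega⟩ := by
  rw [xEl_eq, xList_top hn]
  simp

lemma xList_succ {i : ℕ} (hi : i + 1 < n) :
    xList n i = ⟨i, by omega⟩ :: (xList n (i + 1) ++ [⟨i, by omega⟩]) := by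
  have hlt : i < (List.finRange n).length := by simp only [List.length_finRange]; omega
  have hd : (List.finRange n).drop i = ⟨i, by omega⟩ :: (List.finRange n).drop (i + 1) := by
    rw [List.drop_eq_getElem_cons hlt, List.getElem_finRange]; rfl
  have hne : (List.finRange n).drop (i + 1) ≠ [] := by
    apply List.ne_nil_of_length_pos
    simp only [List.length_drop, List.length_finRange]
    omega
  rw [xList, hd, List.dropLast_cons_of_ne_nil hne]
  rw [List.reverse_cons, xList]
  simp [List.append_assoc]

end XStruct
section XStruct2
variable {n : ℕ}

lemma xEl_succ {i : ℕ} (hi : i + 1 < n) :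
    xEl (⟨i, by omega⟩ : Fin n) = tE ⟨i, by omega⟩ * xEl (⟨i + 1, hi⟩ : Fin n) * tE ⟨i, by omega⟩ := by
  rw [xEl_eq, xEl_eq, xList_succ hi]
  simp [List.prod_append, mul_assoc]

lemma z_pow_comm' (m : ℕ) (g : SpinSym (n + 1)) : zE ^ m * g = g * zE ^ m := by
  induction m with
  | zero => simp
  | succ k ih => rw [pow_succ, mul_assoc, z_comm g, ← mul_assoc, ih, mul_assoc]

lemma z_pow_swap (m : ℕ) (g h : SpinSym (n + 1)) :
    g * (zE ^ m * h) = zE ^ m * (g * h) := by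
  rw [← mul_assoc, ← z_pow_comm', mul_assoc]

/-- push `tE k` through a product of letters all distant from `k` -/
lemma t_prod_distant (k : Fin n) (L : List (Fin n))
    (h : ∀ j ∈ L, (k : ℕ) + 1 < j ∨ (j : ℕ) + 1 < k) :
    tE k * (L.map tE).prod = zE ^ L.length * ((L.map tE).prod * tE k) := by
  induction L with
  | nil => simp
  | cons a L ih =>
    have ha := h a (by simp)
    have hL := fun j hj => h j (List.mem_cons_of_mem a hj)
    rw [List.map_cons, List.prod_cons, ← mul_assoc, distant2 k a ha, List.length_cons]
    simp only [mul_assoc]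
    rw [ih hL, pow_succ']
    simp only [mul_assoc, z_pow_swap]

/-- `t_j` commutes (up to a single `z`) with `x_i` when `j + 1 < i` -/
lemma t_x_distant_lt {j i : Fin n} (h : (j : ℕ) + 1 < i) :
    tE j * xEl i = zE * (xEl i * tE j) := by
  have hmem : ∀ a ∈ xList n i, (j : ℕ) + 1 < a ∨ (a : ℕ) + 1 < j :=
    fun a ha => Or.inl (lt_of_lt_of_le h (mem_xList ha))
  rw [xEl_eq, t_prod_distant j _ hmem, length_xList i.isLt]
  have hodd : (2 * (n - (i : ℕ)) - 1) % 2 = 1 % 2 := by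
    have : 0 < n - (i : ℕ) := by omega
    omega
  rw [z_pow_parity hodd, pow_one]

lemma x_sq (i : Fin n) : xEl i * xEl i = zE := by
  obtain ⟨iv, hiv⟩ := i
  have key : ∀ m iv (hlt : iv < n), n - iv ≤ m → xEl (⟨iv, hlt⟩ : Fin n) * xEl ⟨iv, hlt⟩ = zE := by
    intro m
    induction m with
    | zero => intro iv hlt h; omega
    | succ k ih =>
      intro iv hlt h
      by_cases htop : iv + 1 < n
      · rw [xEl_succ htop]
        have hx := ih (iv + 1) htop (by omega)
        have hx' : ∀ g : SpinSym (n + 1), xEl ⟨iv + 1, htop⟩ * (xEl ⟨iv + 1, htop⟩ * g) = zE * g := by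
          intro g; rw [← mul_assoc, hx]
        simp only [mul_assoc, t_mul_t', z_swap, hx', zz_cancel]
        rw [t_mul_t]
      · have : iv = n - 1 := by omega
        subst this
        rw [xEl_top (by omega), t_mul_t]
  exact key n iv hiv (by omega)

end XStruct2
section TX
variable {n : ℕ}

lemma t_x_self {j : ℕ} (hj : j + 1 < n) :
    tE ⟨j, by omega⟩ * xEl (⟨j, by omega⟩ : Fin n) =
      zE * (xEl (⟨j + 1, hj⟩ : Fin n) * tE ⟨j, by omega⟩) := by
  rw [xEl_succ hj]
  simp only [mul_assoc, t_mul_t']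

lemma t_x_succ {j : ℕ} (hj : j + 1 < n) :
    tE ⟨j, by omega⟩ * xEl (⟨j + 1, hj⟩ : Fin n) =
      zE * (xEl (⟨j, by omega⟩ : Fin n) * tE ⟨j, by omega⟩) := by
  rw [xEl_succ hj]
  simp only [mul_assoc, t_mul_t, t_mul_t', z_swap, z_swap', zz_cancel]

lemma t_x_low {j : ℕ} (hj : j + 1 < n) (d : ℕ) :
    ∀ i (hi : i < n) (_ : i < j) (_ : j - i = d + 1),
    tE ⟨j, by omega⟩ * xEl (⟨i, hi⟩ : Fin n) =
      zE * (xEl (⟨i, hi⟩ : Fin n) * tE ⟨j, by omega⟩) := by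
  induction d with
  | zero =>
    intro i hi hij hd
    have hij' : i + 1 = j := by omega
    subst hij'
    -- x_i = t_i x_{i+1} t_i,  x_{i+1} = t_{i+1} x_{i+2} t_{i+1}
    have h2 : i + 2 < n := by omega
    rw [xEl_succ (by omega : i + 1 < n), xEl_succ h2]
    have hb : tE (⟨i + 1, by omega⟩ : Fin ((n+1)-1)) * tE ⟨i, by omega⟩ * tE ⟨i+1, by omega⟩
        = tE ⟨i, by omega⟩ * tE ⟨i+1, by omega⟩ * tE ⟨i, by omega⟩ :=
      (braid' (n := n + 1) ⟨i, by omega⟩ ⟨i+1, by omega⟩ rfl).symm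
    have hdist : tE (⟨i, by omega⟩ : Fin n) * xEl (⟨i + 2, h2⟩ : Fin n)
        = zE * (xEl ⟨i + 2, h2⟩ * tE ⟨i, by omega⟩) :=
      t_x_distant_lt (by simp)
    -- LHS = t_{i+1} t_i t_{i+1} x_{i+2} t_{i+1} t_i
    calc tE ⟨i+1, by omega⟩ * (tE ⟨i, by omega⟩ * (tE ⟨i+1, by omega⟩ * xEl ⟨i+2,h2⟩ * tE ⟨i+1, by omega⟩) * tE ⟨i, by omega⟩)
        = (tE ⟨i+1, by omega⟩ * tE ⟨i, by omega⟩ * tE ⟨i+1, by omega⟩) * xEl ⟨i+2,h2⟩ * (tE ⟨i+1, by omega⟩ * tE ⟨i, by omega⟩) := by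
          simp only [mul_assoc]
      _ = tE ⟨i, by omega⟩ * tE ⟨i+1, by omega⟩ * (tE ⟨i, by omega⟩ * xEl ⟨i+2,h2⟩) * (tE ⟨i+1, by omega⟩ * tE ⟨i, by omega⟩) := by
          rw [hb]; simp only [mul_assoc]
      _ = tE ⟨i, by omega⟩ * tE ⟨i+1, by omega⟩ * (zE * (xEl ⟨i+2,h2⟩ * tE ⟨i, by omega⟩)) * (tE ⟨i+1, by omega⟩ * tE ⟨i, by omega⟩) := by
          rw [hdist]
      _ = zE * (tE ⟨i, by omega⟩ * tE ⟨i+1, by omega⟩ * xEl ⟨i+2,h2⟩ * (tE ⟨i, by omega⟩ * tE ⟨i+1, by omega⟩ * tE ⟨i, by omega⟩)) := by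
          simp only [mul_assoc, z_swap]
      _ = zE * (tE ⟨i, by omega⟩ * tE ⟨i+1, by omega⟩ * xEl ⟨i+2,h2⟩ * (tE ⟨i+1, by omega⟩ * tE ⟨i, by omega⟩ * tE ⟨i+1, by omega⟩)) := by
          rw [← hb]
      _ = zE * (tE ⟨i, by omega⟩ * (tE ⟨i+1, by omega⟩ * xEl ⟨i+2,h2⟩ * tE ⟨i+1, by omega⟩) * tE ⟨i, by omega⟩ * tE ⟨i+1, by omega⟩) := by
          simp only [mul_assoc]
  | succ d ih =>
    intro i hi hij hd
    have hi1 : i + 1 < n := by omega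
    have hIH := ih (i + 1) hi1 (by omega) (by omega)
    have hdist : tE (⟨j, by omega⟩ : Fin n) * tE ⟨i, hi⟩ = zE * (tE ⟨i, hi⟩ * tE ⟨j, by omega⟩) :=
      distant2 _ _ (Or.inr (by simp; omega))
    rw [xEl_succ hi1]
    calc tE ⟨j, by omega⟩ * (tE ⟨i, by omega⟩ * xEl ⟨i+1,hi1⟩ * tE ⟨i, by omega⟩)
        = (tE ⟨j, by omega⟩ * tE ⟨i, hi⟩) * (xEl ⟨i+1,hi1⟩ * tE ⟨i, by omega⟩) := by
          simp only [mul_assoc]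
      _ = zE * (tE ⟨i, hi⟩ * (tE ⟨j, by omega⟩ * xEl ⟨i+1,hi1⟩) * tE ⟨i, by omega⟩) := by
          rw [hdist]; simp only [mul_assoc]
      _ = zE * (tE ⟨i, hi⟩ * (zE * (xEl ⟨i+1,hi1⟩ * tE ⟨j, by omega⟩)) * tE ⟨i, by omega⟩) := by
          rw [hIH]
      _ = zE * (zE * (tE ⟨i, hi⟩ * xEl ⟨i+1,hi1⟩ * (tE ⟨j, by omega⟩ * tE ⟨i, by omega⟩))) := by
          simp only [mul_assoc, z_swap]
      _ = zE * (zE * (tE ⟨i, hi⟩ * xEl ⟨i+1,hi1⟩ * (zE * (tE ⟨i, by omega⟩ * tE ⟨j, by omega⟩)))) := by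
          rw [hdist]
      _ = zE * (tE ⟨i, by omega⟩ * xEl ⟨i+1,hi1⟩ * tE ⟨i, by omega⟩ * tE ⟨j, by omega⟩) := by
          simp only [mul_assoc, z_swap, zz_cancel]

/-- conjugation of `x_i` by a generator `t_j` with `j ≤ n - 2`, stated via `Equiv.swap`. -/
lemma t_x_swap {j : ℕ} (hj : j + 1 < n) (i : Fin n) :
    tE ⟨j, by omega⟩ * xEl i =
      zE * (xEl (Equiv.swap (⟨j, by omega⟩ : Fin n) ⟨j + 1, hj⟩ i) * tE ⟨j, by omega⟩) := by
  obtain ⟨iv, hiv⟩ := i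
  rcases lt_trichotomy iv j with h | h | h
  · rw [Equiv.swap_apply_of_ne_of_ne (by simp; omega) (by simp; omega)]
    exact t_x_low hj (j - iv - 1) iv hiv h (by omega)
  · subst h
    rw [show (⟨iv, hiv⟩ : Fin n) = ⟨iv, by omega⟩ from rfl, Equiv.swap_apply_left]
    exact t_x_self hj
  · rcases Nat.eq_or_lt_of_le h with h1 | h1
    · have : (⟨iv, hiv⟩ : Fin n) = ⟨j + 1, hj⟩ := by simp [← h1]
      rw [this, Equiv.swap_apply_right]
      exact t_x_succ hj
    · rw [Equiv.swap_apply_of_ne_of_ne (by simp; omega) (by simp; omega)]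
      exact t_x_distant_lt (by simp; omega)

end TX
section K1
variable {m : ℕ}

open Equiv

/-- parametrized version of `t_x_swap` for right-assoc rewriting -/
lemma t_x_swap' {j : ℕ} (hj : j + 1 < m) (c : Fin m) (g : SpinSym (m + 1)) :
    tE ⟨j, by omega⟩ * (xEl c * g) =
      zE * (xEl (Equiv.swap (⟨j, by omega⟩ : Fin m) ⟨j + 1, hj⟩ c) * (tE ⟨j, by omega⟩ * g)) := by
  rw [← mul_assoc, t_x_swap hj c]
  simp only [mul_assoc]

lemma base_pair (hm : 0 < m) :
    xEl (⟨m - 1, by omega⟩ : Fin (m + 1)) * xEl ⟨m, by omega⟩ * xEl ⟨m - 1, by omega⟩ =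
      zE * tE ⟨m - 1, by omega⟩ := by
  have h1 : m - 1 + 1 < m + 1 := by omega
  have hx1 : xEl (⟨m - 1, by omega⟩ : Fin (m + 1)) =
      tE ⟨m - 1, by omega⟩ * xEl ⟨m - 1 + 1, h1⟩ * tE ⟨m - 1, by omega⟩ := xEl_succ h1
  have he : (⟨m - 1 + 1, h1⟩ : Fin (m + 1)) = ⟨m, by omega⟩ := by
    apply Fin.ext; simp; omega
  have hx2 : xEl (⟨m, by omega⟩ : Fin (m + 1)) = tE ⟨m, by omega⟩ :=
    xEl_top (by omega)
  rw [hx1, he, hx2]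
  have hb := braid (n := m + 1 + 1) ⟨m - 1, by omega⟩ ⟨m, by omega⟩ (by simp; omega)
  calc tE ⟨m - 1, by omega⟩ * tE ⟨m, by omega⟩ * tE ⟨m - 1, by omega⟩ * tE ⟨m, by omega⟩ *
        (tE ⟨m - 1, by omega⟩ * tE ⟨m, by omega⟩ * tE ⟨m - 1, by omega⟩)
      = (tE ⟨m - 1, by omega⟩ * tE ⟨m, by omega⟩) * (tE ⟨m - 1, by omega⟩ * tE ⟨m, by omega⟩) *
        (tE ⟨m - 1, by omega⟩ * tE ⟨m, by omega⟩) * tE ⟨m - 1, by omega⟩ := by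
        simp only [mul_assoc]
    _ = zE * tE ⟨m - 1, by omega⟩ := by rw [hb]

/-- the property we propagate -/
def Qprop (a b : Fin m) : Prop :=
  ∀ k : Fin m, (xEl a * (xEl b * xEl a)) * xEl k =
    zE * (xEl (Equiv.swap a b k) * (xEl a * (xEl b * xEl a)))

lemma Qprop_base (hm : 0 < m) : Qprop (⟨m - 1, by omega⟩ : Fin (m + 1)) ⟨m, by omega⟩ := by
  intro k
  have hbp := base_pair hm
  have hA : xEl (⟨m - 1, by omega⟩ : Fin (m + 1)) * (xEl ⟨m, by omega⟩ * xEl ⟨m - 1, by omega⟩) =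
      zE * tE ⟨m - 1, by omega⟩ := by rw [← hbp]; simp only [mul_assoc]
  rw [hA]
  have h1 : m - 1 + 1 < m + 1 := by omega
  have ht := t_x_swap (n := m + 1) h1 k
  have he : (⟨m - 1 + 1, h1⟩ : Fin (m + 1)) = ⟨m, by omega⟩ := by
    apply Fin.ext; simp; omega
  rw [he] at ht
  simp only [mul_assoc]
  rw [ht]
  simp only [z_swap, z_swap', zz_cancel, mul_assoc]

lemma Qprop_step {a b : Fin m} {j : ℕ} (hj : j + 1 < m) (hQ : Qprop a b) :
    Qprop (Equiv.swap (⟨j, by omega⟩ : Fin m) ⟨j + 1, hj⟩ a)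
          (Equiv.swap (⟨j, by omega⟩ : Fin m) ⟨j + 1, hj⟩ b) := by
  intro k
  have hts := fun (c : Fin m) (g : SpinSym (m + 1)) => t_x_swap' hj c g
  apply mul_left_cancel (a := tE ⟨j, by omega⟩)
  have hswc : Equiv.swap (Equiv.swap (⟨j, by omega⟩ : Fin m) ⟨j + 1, hj⟩ a)
      (Equiv.swap (⟨j, by omega⟩ : Fin m) ⟨j + 1, hj⟩ b) k =
      Equiv.swap (⟨j, by omega⟩ : Fin m) ⟨j + 1, hj⟩
        (Equiv.swap a b (Equiv.swap (⟨j, by omega⟩ : Fin m) ⟨j + 1, hj⟩ k)) := by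
    rw [Equiv.swap_apply_apply]
    simp [Equiv.Perm.mul_apply, Equiv.swap_inv]
  have hQ' := fun (k : Fin m) (g : SpinSym (m + 1)) => congrArg (· * g) (hQ k)
  simp only [mul_assoc] at hQ'
  have L : tE ⟨j, by omega⟩ * (xEl (Equiv.swap (⟨j, by omega⟩ : Fin m) ⟨j + 1, hj⟩ a) *
        (xEl (Equiv.swap (⟨j, by omega⟩ : Fin m) ⟨j + 1, hj⟩ b) *
          xEl (Equiv.swap (⟨j, by omega⟩ : Fin m) ⟨j + 1, hj⟩ a)) * xEl k) =
      (zE : SpinSym (m + 1)) * (xEl (Equiv.swap a b (Equiv.swap (⟨j, by omega⟩ : Fin m) ⟨j + 1, hj⟩ k)) *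
        (xEl a * (xEl b * (xEl a * tE ⟨j, by omega⟩)))) := by
    simp only [mul_assoc]
    rw [show xEl k = xEl k * 1 by rw [mul_one]]
    simp only [hts, Equiv.swap_apply_self]
    simp only [mul_one, z_swap, z_swap', zz_cancel, mul_assoc]
    rw [hQ' (Equiv.swap (⟨j, by omega⟩ : Fin m) ⟨j + 1, hj⟩ k) (tE ⟨j, by omega⟩)]
  have R : tE ⟨j, by omega⟩ * ((zE : SpinSym (m + 1)) *
        (xEl (Equiv.swap (Equiv.swap (⟨j, by omega⟩ : Fin m) ⟨j + 1, hj⟩ a)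
          (Equiv.swap (⟨j, by omega⟩ : Fin m) ⟨j + 1, hj⟩ b) k) *
          (xEl (Equiv.swap (⟨j, by omega⟩ : Fin m) ⟨j + 1, hj⟩ a) *
            (xEl (Equiv.swap (⟨j, by omega⟩ : Fin m) ⟨j + 1, hj⟩ b) *
              xEl (Equiv.swap (⟨j, by omega⟩ : Fin m) ⟨j + 1, hj⟩ a))))) =
      (zE : SpinSym (m + 1)) * (xEl (Equiv.swap a b (Equiv.swap (⟨j, by omega⟩ : Fin m) ⟨j + 1, hj⟩ k)) *
        (xEl a * (xEl b * (xEl a * tE ⟨j, by omega⟩)))) := by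
    rw [hswc, z_swap]
    simp only [hts, Equiv.swap_apply_self]
    rw [t_x_swap hj]
    simp only [Equiv.swap_apply_self, z_swap, z_swap', zz_cancel, mul_assoc]
  simp only [mul_assoc] at L R ⊢
  rw [L, ← R]

end K1
section K1all
open Equiv

lemma Qprop_all {n : ℕ} (a b : Fin n) (hab : a ≠ b) : Qprop a b := by
  have hn : 2 ≤ n := by
    rcases a with ⟨av, ha⟩; rcases b with ⟨bv, hb⟩
    by_contra h
    exact hab (Fin.ext (by omega))
  obtain ⟨m, rfl⟩ : ∃ m, n = m + 1 := ⟨n - 1, by omega⟩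
  have hm : 1 ≤ m := by omega
  have key : ∀ σ : Equiv.Perm (Fin (m + 1)),
      Qprop (σ ⟨m - 1, by omega⟩) (σ ⟨m, by omega⟩) := by
    intro σ
    have hσ : σ ∈ Submonoid.closure
        (Set.range fun i : Fin m => Equiv.swap i.castSucc i.succ) := by
      rw [Equiv.Perm.mclosure_swap_castSucc_succ]; trivial
    induction hσ using Submonoid.closure_induction_left with
    | one => simpa using Qprop_base (by omega)
    | mul_left x hx y hy ih =>
      obtain ⟨i, rfl⟩ := hx
      have hj : (i : ℕ) + 1 < m + 1 := by omega
      have hcast : Equiv.swap (Fin.castSucc i) (Fin.succ i) =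
          Equiv.swap (⟨(i : ℕ), by omega⟩ : Fin (m + 1)) ⟨(i : ℕ) + 1, hj⟩ := by
        congr 1 <;> apply Fin.ext <;> simp
      beta_reduce
      rw [hcast]
      simp only [Equiv.Perm.mul_apply]
      exact Qprop_step hj ih
  set a₀ : Fin (m + 1) := ⟨m - 1, by omega⟩ with ha₀
  set b₀ : Fin (m + 1) := ⟨m, by omega⟩ with hb₀
  have hab₀ : a₀ ≠ b₀ := by rw [ha₀, hb₀]; intro h; have := Fin.mk.inj h; omega
  set τ := Equiv.swap b₀ b with hτ
  have ha' : τ a ≠ b₀ := by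
    intro h
    have : τ a = τ b := by rw [h, hτ, Equiv.swap_apply_right]
    exact hab (τ.injective this)
  set σ := τ * Equiv.swap a₀ (τ a) with hσd
  have h1 : σ a₀ = a := by
    rw [hσd]
    simp only [Equiv.Perm.mul_apply, Equiv.swap_apply_left]
    rw [hτ, Equiv.swap_apply_self]
  have h2 : σ b₀ = b := by
    rw [hσd]
    simp only [Equiv.Perm.mul_apply]
    rw [Equiv.swap_apply_of_ne_of_ne (Ne.symm hab₀) (Ne.symm ha'), hτ, Equiv.swap_apply_left]
  have := key σ
  rw [h1, h2] at this
  exact this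

/-- K1: conjugation of `x_k` by `[a b] = x_a x_b x_a`. -/
lemma x_conj_pair {n : ℕ} {a b : Fin n} (hab : a ≠ b) (k : Fin n) :
    (xEl a * (xEl b * xEl a)) * xEl k =
      zE * (xEl (Equiv.swap a b k) * (xEl a * (xEl b * xEl a))) :=
  Qprop_all a b hab k

end K1all
section Cycle
variable {n : ℕ}
open Equiv

lemma swap_shift {α : Type*} [DecidableEq α] {x y d : α} (hxy : x ≠ y) (hxd : x ≠ d)
    (hyd : y ≠ d) : Equiv.swap x y * Equiv.swap y d = Equiv.swap x d * Equiv.swap x y := by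
  have h := Equiv.swap_apply_apply (Equiv.swap x y) y d
  rw [Equiv.swap_apply_right, Equiv.swap_apply_of_ne_of_ne (Ne.symm hxd) (Ne.symm hyd)] at h
  rw [h]
  group

lemma formPerm_concat {α : Type*} [DecidableEq α] :
    ∀ (xs : List α) (x d : α), (x :: (xs ++ [d])).Nodup →
    (x :: (xs ++ [d])).formPerm = Equiv.swap x d * (x :: xs).formPerm
  | [], x, d, _ => by simp [List.formPerm_cons_cons]
  | y :: ys, x, d, h => by
    simp only [List.cons_append] at h
    have facts : x ≠ y ∧ x ≠ d ∧ (y :: (ys ++ [d])).Nodup := by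
      rw [List.nodup_cons] at h
      obtain ⟨hx, h2⟩ := h
      refine ⟨fun he => hx (he ▸ List.mem_cons_self), fun he => hx ?_, h2⟩
      rw [he]
      simp
    obtain ⟨hxy, hxd, h'⟩ := facts
    have hyd : y ≠ d := by
      rw [List.nodup_cons] at h'
      intro he
      exact h'.1 (by rw [he]; simp)
    calc (x :: ((y :: ys) ++ [d])).formPerm
        = (x :: y :: (ys ++ [d])).formPerm := by rw [List.cons_append]
      _ = Equiv.swap x y * (y :: (ys ++ [d])).formPerm := List.formPerm_cons_cons _ _ _
      _ = Equiv.swap x y * (Equiv.swap y d * (y :: ys).formPerm) := by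
          rw [formPerm_concat ys y d h']
      _ = Equiv.swap x d * (x :: y :: ys).formPerm := by
          rw [List.formPerm_cons_cons, ← mul_assoc, ← mul_assoc, swap_shift hxy hxd hyd]

lemma x_mul_x' (c : Fin n) (g : SpinSym (n + 1)) : xEl c * (xEl c * g) = zE * g := by
  rw [← mul_assoc, x_sq]

lemma cycleEl_concat (a d : Fin n) (r : List (Fin n)) (hr : r ≠ []) :
    cycleEl (a :: (r ++ [d])) =
      zE * ((xEl a * (xEl d * xEl a)) * cycleEl (a :: r)) := by
  obtain ⟨b, r', rfl⟩ : ∃ b r', r = b :: r' := by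
    cases r with
    | nil => exact absurd rfl hr
    | cons b r' => exact ⟨b, r', rfl⟩
  show xEl a * ((List.map xEl (a :: (b :: r' ++ [d])).reverse).prod) = _
  have hrev : (a :: (b :: r' ++ [d])).reverse = d :: (a :: b :: r').reverse := by
    simp
  rw [hrev, List.map_cons, List.prod_cons]
  show _ = zE * ((xEl a * (xEl d * xEl a)) *
      (xEl a * (List.map xEl (a :: b :: r').reverse).prod))
  simp only [mul_assoc, x_mul_x', z_swap, zz_cancel]

lemma zmove (g h : SpinSym (n + 1)) (L : ℕ) :
    zE * (zE ^ L * (zE * (g * h))) = zE ^ (L + 1) * (g * (zE * h)) := by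
  rw [z_pow_swap, zz_cancel, pow_succ, mul_assoc, z_swap g h, zz_cancel]

lemma cycle_conj (a : Fin n) (r : List (Fin n)) :
    (a :: r).Nodup → ∀ k, cycleEl (a :: r) * xEl k =
      zE ^ r.length * (xEl ((a :: r).formPerm k) * cycleEl (a :: r)) := by
  induction r using List.reverseRecOn with
  | nil =>
    intro _ k
    show zEl (n + 1) * xEl k = zE ^ 0 * (xEl ((List.formPerm [a]) k) * zEl (n + 1))
    rw [List.formPerm_singleton]
    simp [z_comm]
  | append_singleton r' d ih =>
    intro hnd k
    cases r' with
    | nil =>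
      simp only [List.nil_append] at hnd ⊢
      have had : a ≠ d := by
        rw [List.nodup_cons] at hnd
        exact fun h => hnd.1 (by rw [h]; simp)
      have hC : cycleEl [a, d] = xEl a * (xEl d * xEl a) := by
        show xEl a * (List.map xEl ([a, d] : List (Fin n)).reverse).prod = _
        simp [mul_assoc]
      rw [hC, x_conj_pair had k, List.formPerm_pair, List.length_singleton, pow_one]
    | cons b r'' =>
      have hr : (b :: r'' : List (Fin n)) ≠ [] := by simp
      have hnd' : (a :: b :: r'').Nodup := by
        have hsub : List.Sublist (a :: b :: r'') (a :: ((b :: r'') ++ [d])) :=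
          List.cons_sublist_cons.mpr (List.sublist_append_left _ _)
        exact hsub.nodup hnd
      have hC := cycleEl_concat a d (b :: r'') hr
      have had : a ≠ d := by
        rw [List.nodup_cons] at hnd
        exact fun h => hnd.1 (by rw [h]; simp)
      have hfp := formPerm_concat (b :: r'') a d hnd
      have ihk := ih hnd' k
      rw [hC, hfp]
      calc zE * ((xEl a * (xEl d * xEl a)) * cycleEl (a :: b :: r'')) * xEl k
          = zE * ((xEl a * (xEl d * xEl a)) * (cycleEl (a :: b :: r'') * xEl k)) := by
            simp only [mul_assoc]
        _ = zE * ((xEl a * (xEl d * xEl a)) * (zE ^ (b :: r'').length *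
              (xEl ((a :: b :: r'').formPerm k) * cycleEl (a :: b :: r'')))) := by rw [ihk]
        _ = zE * (zE ^ (b :: r'').length * ((xEl a * (xEl d * xEl a)) *
              xEl ((a :: b :: r'').formPerm k) * cycleEl (a :: b :: r''))) := by
            simp only [mul_assoc, z_pow_swap]
        _ = zE * (zE ^ (b :: r'').length * (zE * (xEl (Equiv.swap a d ((a :: b :: r'').formPerm k)) *
              ((xEl a * (xEl d * xEl a)) * cycleEl (a :: b :: r''))))) := by
            rw [x_conj_pair had]
            simp only [mul_assoc]
        _ = zE ^ ((b :: r'') ++ [d]).length * (xEl (Equiv.swap a d ((a :: b :: r'').formPerm k)) *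
              (zE * ((xEl a * (xEl d * xEl a)) * cycleEl (a :: b :: r'')))) := by
            rw [List.length_append, List.length_singleton, zmove]
        _ = zE ^ ((b :: r'') ++ [d]).length * (xEl ((Equiv.swap a d * (a :: b :: r'').formPerm) k) *
              (zE * ((xEl a * (xEl d * xEl a)) * cycleEl (a :: b :: r'')))) := by
            rw [Equiv.Perm.mul_apply]

end Cycle
section Assemble
variable {n : ℕ}

lemma cycle_conj' (l : List (Fin n)) (hl : l.Nodup) (k : Fin n) :
    cycleEl l * xEl k = zE ^ (l.length - 1) * (xEl (l.formPerm k) * cycleEl l) := by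
  cases l with
  | nil => rw [show cycleEl ([] : List (Fin n)) = 1 from rfl, List.formPerm_nil]; simp
  | cons a r =>
    have := cycle_conj a r hl k
    rw [List.length_cons, Nat.add_sub_cancel]
    exact this

lemma prodS_x (S : List (List (Fin n))) (hS : ∀ r ∈ S, r.Nodup) (k : Fin n) :
    (S.map cycleEl).prod * xEl k =
      zE ^ ((S.map (fun r => r.length - 1)).sum) *
        (xEl ((S.map List.formPerm).prod k) * (S.map cycleEl).prod) := by
  induction S with
  | nil => simp
  | cons r S' ih =>
    have hr := hS r (by simp)
    have hS' : ∀ q ∈ S', q.Nodup := fun q h => hS q (List.mem_cons_of_mem _ h)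
    simp only [List.map_cons, List.prod_cons, List.sum_cons, Equiv.Perm.mul_apply]
    rw [mul_assoc, ih hS', z_pow_swap, ← mul_assoc (cycleEl r), cycle_conj' r hr]
    rw [pow_add]
    simp only [mul_assoc]
    rw [z_pow_swap]

lemma zmerge (a b : ℕ) (g h : SpinSym (n + 1)) :
    zE ^ a * (g * (zE ^ b * h)) = zE ^ (a + b) * (g * h) := by
  rw [z_pow_swap b g h, ← mul_assoc, ← pow_add]

/-- push `t_S` through a list of `x`'s -/
lemma prodS_xlist (S : List (List (Fin n))) (hS : ∀ r ∈ S, r.Nodup) (L : List (Fin n)) :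
    (S.map cycleEl).prod * (L.map xEl).prod =
      zE ^ ((S.map (fun r => r.length - 1)).sum * L.length) *
        ((L.map (fun c => xEl ((S.map List.formPerm).prod c))).prod * (S.map cycleEl).prod) := by
  induction L with
  | nil => simp
  | cons c L' ih =>
    simp only [List.map_cons, List.prod_cons, List.length_cons]
    rw [← mul_assoc, prodS_x S hS c, mul_assoc, mul_assoc, ih, zmerge]
    rw [show (S.map (fun r => r.length - 1)).sum * (L'.length + 1)
        = (S.map (fun r => r.length - 1)).sum
          + (S.map (fun r => r.length - 1)).sum * L'.length by ring]
    simp only [mul_assoc]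

lemma cycleEl_cons_cons (a b : Fin n) (rest : List (Fin n)) :
    cycleEl (a :: b :: rest) = xEl a * (((a :: b :: rest).reverse).map xEl).prod := rfl

lemma cycleEl_as_prod (a b : Fin n) (rest : List (Fin n)) :
    cycleEl (a :: b :: rest) = ((a :: (a :: b :: rest).reverse).map xEl).prod := by
  rw [cycleEl_cons_cons, List.map_cons, List.prod_cons]

/-- push `t_S` through a row cycle -/
lemma prodS_cycle (S : List (List (Fin n))) (hS : ∀ r ∈ S, r.Nodup)
    (row : List (Fin n)) (hrow : row ≠ []) :
    (S.map cycleEl).prod * cycleEl row =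
      zE ^ ((S.map (fun r => r.length - 1)).sum * (row.length + 1)) *
        (cycleEl (row.map ((S.map List.formPerm).prod : Equiv.Perm (Fin n)))
          * (S.map cycleEl).prod) := by
  match row, hrow with
  | [], h => exact absurd rfl h
  | [a], _ =>
    have h2 : zE ^ ((S.map (fun r => r.length - 1)).sum * (([a] : List (Fin n)).length + 1))
        = (1 : SpinSym (n + 1)) := by
      simp only [List.length_singleton]
      rw [z_pow_parity (b := 0) (by omega), pow_zero]
    rw [show cycleEl ([a].map ((S.map List.formPerm).prod : Equiv.Perm (Fin n)))
        = zEl (n + 1) from rfl,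
      show cycleEl ([a] : List (Fin n)) = zEl (n + 1) from rfl, h2, one_mul, z_comm]
  | a :: b :: rest, _ =>
    set σ : Equiv.Perm (Fin n) := (S.map List.formPerm).prod with hσ
    have key := prodS_xlist S hS (a :: (a :: b :: rest).reverse)
    have hlen : (a :: (a :: b :: rest).reverse).length = (a :: b :: rest).length + 1 := by
      simp
    have hmap : ((a :: (a :: b :: rest).reverse).map (fun c => xEl (σ c))).prod
        = cycleEl ((a :: b :: rest).map σ) := by
      rw [show (a :: b :: rest).map σ = σ a :: σ b :: rest.map σ from rfl,
        cycleEl_cons_cons, List.map_cons, List.prod_cons]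
      congr 1
      rw [show (σ a :: σ b :: rest.map σ : List (Fin n)) = (a :: b :: rest).map σ from rfl,
        ← List.map_reverse, List.map_map]
      rfl
    rw [cycleEl_as_prod a b rest, key, hlen, hmap]

end Assemble
section Final
variable {n : ℕ}

lemma prodS_prodT (S T : List (List (Fin n))) (hS : ∀ r ∈ S, r.Nodup)
    (hT : ∀ r ∈ T, r ≠ []) :
    (S.map cycleEl).prod * (T.map cycleEl).prod =
      zE ^ ((S.map (fun r => r.length - 1)).sum * (T.map (fun r => r.length + 1)).sum) *
        ((T.map (fun row => cycleEl (row.map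
            ((S.map List.formPerm).prod : Equiv.Perm (Fin n))))).prod * (S.map cycleEl).prod) := by
  induction T with
  | nil => simp
  | cons row T' ih =>
    have hrow := hT row (by simp)
    have hT' : ∀ r ∈ T', r ≠ [] := fun r h => hT r (List.mem_cons_of_mem _ h)
    simp only [List.map_cons, List.prod_cons, List.sum_cons]
    rw [← mul_assoc, prodS_cycle S hS row hrow, mul_assoc, mul_assoc, ih hT', zmerge]
    rw [show (S.map (fun r => r.length - 1)).sum * (row.length + 1)
        + (S.map (fun r => r.length - 1)).sum * (T'.map (fun r => r.length + 1)).sum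
        = (S.map (fun r => r.length - 1)).sum
          * (row.length + 1 + (T'.map (fun r => r.length + 1)).sum) by ring]
    simp only [mul_assoc]

lemma sum_lengths_eq {L : List (List (Fin n))} (h1 : L.flatten.Nodup)
    (h2 : ∀ a : Fin n, a ∈ L.flatten) : (L.map List.length).sum = n := by
  have huniv : L.flatten.toFinset = Finset.univ :=
    Finset.eq_univ_iff_forall.mpr fun a => List.mem_toFinset.mpr (h2 a)
  have hcard : L.flatten.toFinset.card = L.flatten.length := List.toFinset_card_of_nodup h1
  have : L.flatten.length = n := by
    rw [← hcard, huniv, Finset.card_univ, Fintype.card_fin]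
  rw [← List.length_flatten, this]

lemma sum_sub_one_add {L : List (List (Fin n))} (h0 : ∀ r ∈ L, r ≠ []) :
    (L.map (fun r => r.length - 1)).sum + L.length = (L.map List.length).sum := by
  induction L with
  | nil => simp
  | cons r L' ih =>
    have hr : r.length ≥ 1 := List.length_pos_iff.mpr (h0 r (by simp))
    have := ih fun q h => h0 q (List.mem_cons_of_mem _ h)
    simp only [List.map_cons, List.sum_cons, List.length_cons]
    omega

lemma sum_add_one {L : List (List (Fin n))} :
    (L.map (fun r => r.length + 1)).sum = (L.map List.length).sum + L.length := by
  induction L with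
  | nil => simp
  | cons r L' ih => simp only [List.map_cons, List.sum_cons, List.length_cons]; omega

end Final

/-- `statement_4`: for tableaux `T_λ, T_μ` of partition shapes `λ, μ` of `n` (encoded as
lists of rows, the rows being nonempty lists of distinct elements which together enumerate
`Fin n = {1, …, n}`, with weakly decreasing row lengths), the associated elements
`t_λ = ∏ rows [a_{i1} ⋯ a_{iλ_i}]`, `t_μ` of `S̃_n ⊂ S̃_{n+1}` satisfy
`t_μ t_λ t_μ⁻¹ = z^{d(λ)d(μ)} t_λ^{s(μ)}`, where `s(μ) ∈ S_n` is the permutation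
associated with `T_μ`, `t_λ^{s} = ∏ rows [s(a_{i1}) ⋯ s(a_{iλ_i})]`, and
`d(λ) = |λ| − l(λ)`. -/
theorem statement_4 (n : ℕ) (T S : List (List (Fin n)))
    (hT0 : ∀ l ∈ T, l ≠ []) (hT1 : T.flatten.Nodup) (hT2 : ∀ a : Fin n, a ∈ T.flatten)
    (hTshape : (T.map List.length).Pairwise (· ≥ ·))
    (hS0 : ∀ l ∈ S, l ≠ []) (hS1 : S.flatten.Nodup) (hS2 : ∀ a : Fin n, a ∈ S.flatten)
    (hSshape : (S.map List.length).Pairwise (· ≥ ·)) :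
    (S.map cycleEl).prod * (T.map cycleEl).prod * ((S.map cycleEl).prod)⁻¹ =
      zEl (n + 1) ^ ((n - T.length) * (n - S.length)) *
        (T.map (fun row => cycleEl (row.map ((S.map List.formPerm).prod : Equiv.Perm (Fin n))))).prod := by
  have hSrows : ∀ r ∈ S, r.Nodup := fun r hr => (List.nodup_flatten.mp hS1).1 r hr
  have key := prodS_prodT S T hSrows hT0
  rw [key, mul_assoc, mul_inv_cancel_right]
  congr 1
  -- z-power parity bookkeeping
  have hSn : (S.map List.length).sum = n := sum_lengths_eq hS1 hS2
  have hTn : (T.map List.length).sum = n := sum_lengths_eq hT1 hT2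
  have hSe : (S.map (fun r => r.length - 1)).sum + S.length = n := by
    rw [sum_sub_one_add hS0, hSn]
  have hTe' : (T.map (fun r => r.length - 1)).sum + T.length = n := by
    rw [sum_sub_one_add hT0, hTn]
  have hTe : (T.map (fun r => r.length + 1)).sum = n + T.length := by
    rw [sum_add_one, hTn]
  apply z_pow_parity
  rw [hTe]
  set a := (S.map (fun r => r.length - 1)).sum
  have ha : a = n - S.length := by omega
  have hTl : T.length ≤ n := by omega
  rw [ha, Nat.mul_mod, Nat.mul_mod (n - T.length)]
  have h1 : (n + T.length) % 2 = (n - T.length) % 2 := by omega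
  rw [h1, Nat.mul_comm ((n - S.length) % 2)]
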